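/- Let S be a finite nonempty set of points in ℝ^d, and let B(C_OPT, r) be a minimum enclosing ball of S (the ball of smallest radius containing S). Then for any point C ≠ C_OPT, there exists a point P ∈ S with ⟨C - C_OPT, P - C_OPT⟩ ≤ 0, i.e., P lies on the closed hemisphere of the enclosing ball facing away from C. -/

import Mathlib

theorem hemisphere_point_exists (d : ℕ) (S : Finset (EuclideanSpace ℝ (Fin d)))
    (hS : S.Nonempty) (COPT : EuclideanSpace ℝ (Fin d)) (r : ℝ)
    (hcov : ∀ P ∈ S, dist COPT P ≤ r)
    (hmin : ∀ (C' : EuclideanSpace ℝ (Fin d)) (r' : ℝ),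
      (∀ P ∈ S, dist C' P ≤ r') → r ≤ r')
    (C : EuclideanSpace ℝ (Fin d)) (hC : C ≠ COPT) :
    ∃ P ∈ S, (inner ℝ (C - COPT) (P - COPT) : ℝ) ≤ 0 := by
  by_contra h
  push_neg at h
  set v := C - COPT with hv
  have hv0 : v ≠ 0 := sub_ne_zero.mpr hC
  have hvn : (0:ℝ) < ‖v‖ ^ 2 := pow_pos (norm_pos_iff.mpr hv0) 2
  set ε := S.inf' hS (fun P => (inner ℝ v (P - COPT) : ℝ)) with hεdef
  have hεpos : 0 < ε := by
    rw [hεdef, Finset.lt_inf'_iff]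
    exact h
  obtain ⟨P0, hP0⟩ := hS
  have hr0 : 0 ≤ r := le_trans dist_nonneg (hcov P0 hP0)
  have hrpos : 0 < r := by
    rcases hr0.lt_or_eq with h' | h'
    · exact h'
    · exfalso
      have h1 : dist COPT P0 ≤ 0 := by rw [h']; exact hcov P0 hP0
      have h2 : P0 = COPT := by
        have := le_antisymm h1 dist_nonneg
        rw [dist_eq_zero] at this
        exact this.symm
      have := h P0 hP0
      rw [h2, sub_self, inner_zero_right] at this
      exact lt_irrefl 0 this
  set t : ℝ := ε / ‖v‖ ^ 2 with ht
  set C' : EuclideanSpace ℝ (Fin d) := COPT + t • v with hC'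
  set r' : ℝ := Real.sqrt (r ^ 2 - ε ^ 2 / ‖v‖ ^ 2) with hr'
  have hcov' : ∀ P ∈ S, dist C' P ≤ r' := by
    intro P hP
    have hip : ε ≤ (inner ℝ v (P - COPT) : ℝ) :=
      Finset.inf'_le (fun P => (inner ℝ v (P - COPT) : ℝ)) hP
    have hsq : dist C' P ^ 2 ≤ r ^ 2 - ε ^ 2 / ‖v‖ ^ 2 := by
      have hd : dist C' P ^ 2 = ‖(COPT - P) + t • v‖ ^ 2 := by
        have he : C' - P = (COPT - P) + t • v := by rw [hC']; abel
        rw [dist_eq_norm, he]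
      rw [hd, norm_add_sq_real]
      have h1 : (inner ℝ (COPT - P) (t • v) : ℝ) = -(t * (inner ℝ v (P - COPT) : ℝ)) := by
        rw [real_inner_smul_right, real_inner_comm]
        have : (inner ℝ v (COPT - P) : ℝ) = -(inner ℝ v (P - COPT) : ℝ) := by
          rw [← inner_neg_right, neg_sub]
        rw [this]; ring
      rw [h1, norm_smul]
      have h2 : ‖COPT - P‖ ^ 2 ≤ r ^ 2 := by
        have := hcov P hP
        rw [dist_eq_norm] at this
        nlinarith [norm_nonneg (COPT - P)]
      have h3 : (‖t‖ * ‖v‖) ^ 2 = t ^ 2 * ‖v‖ ^ 2 := by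
        rw [mul_pow, Real.norm_eq_abs, sq_abs]
      have h4 : t * (inner ℝ v (P - COPT) : ℝ) ≥ t * ε := by
        apply mul_le_mul_of_nonneg_left hip
        positivity
      have h5 : t ^ 2 * ‖v‖ ^ 2 = ε ^ 2 / ‖v‖ ^ 2 := by
        rw [ht]; field_simp
      rw [h3, h5]
      have h6 : t * ε = ε ^ 2 / ‖v‖ ^ 2 := by rw [ht]; field_simp
      nlinarith
    rw [hr']
    rw [show dist C' P = Real.sqrt (dist C' P ^ 2) by
      rw [Real.sqrt_sq dist_nonneg]]
    exact Real.sqrt_le_sqrt hsq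
  have hle := hmin C' r' hcov'
  have hlt : r' < r := by
    rw [hr', Real.sqrt_lt' hrpos]
    have : 0 < ε ^ 2 / ‖v‖ ^ 2 := by positivity
    linarith
  linarith
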